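/- arXiv:1310.5292 — 2 statements merged into one kernel-verified Lean document; each statement's English description precedes it below -/
import Mathlib

section
/- Let A be an n×n nonnegative irreducible matrix with zero diagonal and row sums r₁ ≥ r₂ ≥ ... ≥ r_n, and let N = max_{i≠j} a_{ij} > 0. Then for each 1 ≤ i ≤ n, ρ(A) ≤ (r_i − N + √((r_i + N)² + 4N·Σ_{k=1}^{i−1}(r_k − r_i)))/2. -/
open Matrix Finset Real

/-- Spectral radius: largest modulus of a complex eigenvalue (root of the
characteristic polynomial). -/
noncomputable def specRad {n : ℕ} (A : Matrix (Fin n) (Fin n) ℝ) : ℝ :=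
  (((A.map (Complex.ofReal)).charpoly.roots).map (fun z => ‖z‖)).foldr max 0

/-- Irreducibility of a nonnegative matrix. -/
def Irred {n : ℕ} (A : Matrix (Fin n) (Fin n) ℝ) : Prop :=
  ∀ i j : Fin n, ∃ k : ℕ, 0 < (A ^ k) i j

private lemma foldr_max_le (t : ℝ) (s : Multiset ℝ) (h0 : 0 ≤ t) (h : ∀ x ∈ s, x ≤ t) :
    s.foldr max 0 ≤ t := by
  induction s using Multiset.induction_on with
  | empty => simpa using h0
  | cons a s ih =>
    simp only [Multiset.foldr_cons]
    exact max_le (h a (by simp)) (ih fun x hx => h x (by simp [hx]))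

private lemma eig_of_root {n : ℕ} (M : Matrix (Fin n) (Fin n) ℂ) (μ : ℂ)
    (h : M.charpoly.IsRoot μ) : ∃ v ≠ 0, M *ᵥ v = μ • v := by
  have hdet : (scalar (Fin n) μ - M).det = 0 := by
    have := h
    rw [Polynomial.IsRoot, Matrix.charpoly, eval_det, matPolyEquiv_charmatrix] at this
    simpa using this
  obtain ⟨v, hv0, hv⟩ := (Matrix.exists_mulVec_eq_zero_iff).mpr hdet
  refine ⟨v, hv0, ?_⟩
  rw [Matrix.sub_mulVec] at hv
  have h2 : scalar (Fin n) μ *ᵥ v = μ • v := by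
    funext k
    simp [Matrix.scalar, Matrix.mulVec_diagonal]
  rw [h2] at hv
  exact (sub_eq_zero.mp hv).symm

theorem stmt_4 {n : ℕ} (A : Matrix (Fin n) (Fin n) ℝ)
    (hA : ∀ i j, 0 ≤ A i j) (hirr : Irred A) (hdiag : ∀ i, A i i = 0)
    (r : Fin n → ℝ) (hr : ∀ i, r i = ∑ j, A i j)
    (N : ℝ) (hN : IsGreatest {x | ∃ i j, i ≠ j ∧ x = A i j} N)
    (hord : ∀ i j : Fin n, i ≤ j → r j ≤ r i) (hNpos : 0 < N) :
    ∀ i : Fin n, specRad A ≤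
      (r i - N +
        Real.sqrt ((r i + N) ^ 2 + 4 * N * ∑ k ∈ Finset.Iio i, (r k - r i))) / 2 := by
  intro i
  have hrnn : ∀ k, 0 ≤ r k := fun k => (hr k) ▸ Finset.sum_nonneg fun j _ => hA k j
  set S := ∑ k ∈ Finset.Iio i, (r k - r i) with hSdef
  have hS : 0 ≤ S := Finset.sum_nonneg fun k hk =>
    sub_nonneg.2 (hord k i (le_of_lt (Finset.mem_Iio.mp hk)))
  have hD : (0:ℝ) ≤ (r i + N) ^ 2 + 4 * N * S := by positivity
  set t := (r i - N + Real.sqrt ((r i + N) ^ 2 + 4 * N * S)) / 2 with htdef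
  have hriN : 0 ≤ r i + N := by linarith [hrnn i]
  have hsle : r i + N ≤ Real.sqrt ((r i + N) ^ 2 + 4 * N * S) := by
    have h1 : Real.sqrt ((r i + N) ^ 2) ≤ Real.sqrt ((r i + N) ^ 2 + 4 * N * S) :=
      Real.sqrt_le_sqrt (by nlinarith)
    rwa [Real.sqrt_sq hriN] at h1
  have hti : r i ≤ t := by rw [htdef]; linarith
  have ht0 : 0 ≤ t := le_trans (hrnn i) hti
  have hs2t : 2 * t - (r i - N) = Real.sqrt ((r i + N) ^ 2 + 4 * N * S) := by
    rw [htdef]; ring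
  have hsq2 : (2 * t - (r i - N)) ^ 2 = (r i + N) ^ 2 + 4 * N * S := by
    rw [hs2t]; exact Real.sq_sqrt hD
  have hkey : t * (t - r i + N) = N * (r i + S) := by linear_combination hsq2 / 4
  set u : Fin n → ℝ := fun k => r k + (t - r i) + N with hudef
  have hu : ∀ k, 0 < u k := by
    intro k
    have := hrnn k
    simp only [hudef]
    linarith
  -- row sum bound for the similar matrix
  have hrow : ∀ k, (∑ j, A k j * u j) ≤ t * u k := by
    intro k
    have h1 : ∑ j, A k j * (r j - r i) ≤
        ∑ j, (if j ∈ (Finset.Iio i).erase k then N * (r j - r i) else 0) := by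
      apply Finset.sum_le_sum
      intro j _
      by_cases hjk : j = k
      · subst hjk
        simp [hdiag, Finset.mem_erase]
      · by_cases hji : j ∈ Finset.Iio i
        · rw [if_pos (Finset.mem_erase.mpr ⟨hjk, hji⟩)]
          exact mul_le_mul_of_nonneg_right (hN.2 ⟨k, j, Ne.symm hjk, rfl⟩)
            (sub_nonneg.2 (hord j i (le_of_lt (Finset.mem_Iio.mp hji))))
        · rw [if_neg (fun hmem => hji (Finset.mem_erase.mp hmem).2)]
          have hji' : r j ≤ r i :=
            hord i j (le_of_not_gt (by simpa [Finset.mem_Iio] using hji))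
          exact mul_nonpos_of_nonneg_of_nonpos (hA k j) (by linarith)
    have h2 : ∑ j, (if j ∈ (Finset.Iio i).erase k then N * (r j - r i) else 0) =
        ∑ j ∈ (Finset.Iio i).erase k, N * (r j - r i) := by
      rw [Finset.sum_ite_mem, Finset.univ_inter]
    have h3 : ∑ j ∈ (Finset.Iio i).erase k, N * (r j - r i) ≤
        N * S - (if k ∈ Finset.Iio i then N * (r k - r i) else 0) := by
      by_cases hk : k ∈ Finset.Iio i
      · rw [Finset.sum_erase_eq_sub hk, if_pos hk, ← Finset.mul_sum]
      · rw [Finset.erase_eq_of_notMem hk, if_neg hk, ← Finset.mul_sum, sub_zero, hSdef]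
    have hbound : ∑ j, A k j * (r j - r i) ≤
        N * S - (if k ∈ Finset.Iio i then N * (r k - r i) else 0) :=
      le_trans h1 (le_trans (le_of_eq h2) h3)
    have hsum : ∑ j, A k j * u j =
        (∑ j, A k j * (r j - r i)) + (r i + (t - r i) + N) * r k := by
      have hterm : ∀ j, A k j * u j = A k j * (r j - r i) + A k j * (r i + (t - r i) + N) := by
        intro j; simp only [hudef]; ring
      rw [Finset.sum_congr rfl (fun j _ => hterm j), Finset.sum_add_distrib,
        ← Finset.sum_mul, ← hr k]
      ring
    rw [hsum]
    by_cases hk : k ∈ Finset.Iio i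
    · rw [if_pos hk] at hbound
      simp only [hudef]
      nlinarith [hbound, hkey]
    · rw [if_neg hk] at hbound
      have hrk : r k ≤ r i :=
        hord i k (le_of_not_gt (by simpa [Finset.mem_Iio] using hk))
      simp only [hudef]
      nlinarith [hbound, hkey, hNpos]
  -- spectral radius bound
  show specRad A ≤ t
  unfold specRad
  apply foldr_max_le t _ ht0
  intro x hx
  obtain ⟨μ, hμ, rfl⟩ := Multiset.mem_map.mp hx
  have hroot : (A.map Complex.ofReal).charpoly.IsRoot μ := (Polynomial.mem_roots'.mp hμ).2
  obtain ⟨v, hv0, hv⟩ := eig_of_root _ _ hroot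
  obtain ⟨k, -, hk⟩ := Finset.exists_max_image Finset.univ
    (fun j => ‖v j‖ / u j) ⟨i, Finset.mem_univ i⟩
  have hvk : 0 < ‖v k‖ := by
    obtain ⟨j, hj⟩ := Function.ne_iff.mp hv0
    have hj' : 0 < ‖v j‖ / u j :=
      div_pos (norm_pos_iff.mpr (by simpa using hj)) (hu j)
    have h2 := lt_of_lt_of_le hj' (hk j (Finset.mem_univ j))
    have h3 := mul_pos h2 (hu k)
    rwa [div_mul_cancel₀ _ (hu k).ne'] at h3
  have hcomp : ∀ j, ‖v j‖ ≤ u j * (‖v k‖ / u k) := by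
    intro j
    have h := hk j (Finset.mem_univ j)
    rw [div_le_div_iff₀ (hu j) (hu k)] at h
    rw [← mul_div_assoc, le_div_iff₀ (hu k)]
    linarith [h]
  have heq : ∑ j, (A.map Complex.ofReal) k j * v j = μ * v k := by
    have := congrFun hv k
    simpa [Matrix.mulVec, dotProduct] using this
  have habs : ‖μ‖ * ‖v k‖ ≤ ∑ j, A k j * ‖v j‖ := by
    calc ‖μ‖ * ‖v k‖ = ‖μ * v k‖ := (norm_mul _ _).symm
      _ = ‖∑ j, (A.map Complex.ofReal) k j * v j‖ := by rw [heq]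
      _ ≤ ∑ j, ‖(A.map Complex.ofReal) k j * v j‖ :=
          norm_sum_le _ _
      _ = ∑ j, A k j * ‖v j‖ := by
          apply Finset.sum_congr rfl
          intro j _
          rw [norm_mul, Matrix.map_apply, Complex.norm_real, Real.norm_of_nonneg (hA k j)]
  have hchain : ∑ j, A k j * ‖v j‖ ≤ t * ‖v k‖ := by
    calc ∑ j, A k j * ‖v j‖
        ≤ ∑ j, A k j * (u j * (‖v k‖ / u k)) :=
          Finset.sum_le_sum fun j _ => mul_le_mul_of_nonneg_left (hcomp j) (hA k j)
      _ = (∑ j, A k j * u j) * (‖v k‖ / u k) := by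
          rw [Finset.sum_mul]
          exact Finset.sum_congr rfl fun j _ => (mul_assoc _ _ _).symm
      _ ≤ (t * u k) * (‖v k‖ / u k) :=
          mul_le_mul_of_nonneg_right (hrow k)
            (div_nonneg (norm_nonneg _) (hu k).le)
      _ = t * ‖v k‖ := by
          rw [mul_right_comm, mul_assoc, div_mul_cancel₀ _ (hu k).ne']
  exact le_of_mul_le_mul_right (le_trans habs hchain) hvk
end

section
/- Let A be an n×n nonnegative irreducible matrix with row sums r₁ ≥ r₂ ≥ ... ≥ r_n. Let S = min_i a_{ii} and T = min_{i≠j} a_{ij}. Then ρ(A) ≥ (r_n + S − T + √((r_n − S + T)² + 4T·Σ_{k=1}^{n−1}(r_k − r_n)))/2. -/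
open Matrix Finset Real

section Aux

open Filter
open scoped ENNReal NNReal

lemma specRad_aux_foldr_max_nonneg (s : Multiset ℝ) : 0 ≤ s.foldr max 0 := by
  induction s using Multiset.induction_on with
  | empty => simp
  | cons a s ih => rw [Multiset.foldr_cons]; exact le_trans ih (le_max_right _ _)

lemma specRad_aux_le_foldr_max {s : Multiset ℝ} {a : ℝ} (h : a ∈ s) : a ≤ s.foldr max 0 := by
  induction s using Multiset.induction_on with
  | empty => simp at h
  | cons b s ih =>
    rw [Multiset.foldr_cons]
    rcases Multiset.mem_cons.mp h with h | h
    · exact h ▸ le_max_left _ _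
    · exact le_trans (ih h) (le_max_right _ _)

lemma specRad_nonneg {n : ℕ} (A : Matrix (Fin n) (Fin n) ℝ) : 0 ≤ specRad A :=
  specRad_aux_foldr_max_nonneg _

lemma specRad_aux_mem_roots_of_mem_spectrum {n : ℕ} (M : Matrix (Fin n) (Fin n) ℂ) (μ : ℂ)
    (h : μ ∈ spectrum ℂ M) : μ ∈ M.charpoly.roots := by
  rw [Polynomial.mem_roots (M.charpoly_monic.ne_zero)]
  rw [spectrum.mem_iff] at h
  rw [Matrix.isUnit_iff_isUnit_det, isUnit_iff_ne_zero, not_not] at h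
  rw [Polynomial.IsRoot.def]
  have key : (Matrix.charmatrix M).map (Polynomial.evalRingHom μ) =
      algebraMap ℂ (Matrix (Fin n) (Fin n) ℂ) μ - M := by
    ext i j
    by_cases hij : i = j
    · subst hij
      simp [Matrix.charmatrix_apply_eq, Matrix.algebraMap_matrix_apply]
    · simp [Matrix.charmatrix_apply_ne _ _ _ hij, Matrix.algebraMap_matrix_apply, hij]
  calc Polynomial.eval μ M.charpoly
      = (Polynomial.evalRingHom μ) (Matrix.det (Matrix.charmatrix M)) := rfl
    _ = Matrix.det ((Matrix.charmatrix M).map (Polynomial.evalRingHom μ)) := by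
        rw [RingHom.map_det]; rfl
    _ = 0 := by rw [key]; exact h

lemma specRad_aux_pow_entry_nonneg {m : ℕ} {A : Matrix (Fin m) (Fin m) ℝ}
    (hA : ∀ i j, 0 ≤ A i j) (k : ℕ) : ∀ i j, 0 ≤ (A ^ k) i j := by
  induction k with
  | zero =>
    intro i j
    rw [pow_zero]
    rcases eq_or_ne i j with h | h
    · simp [h, Matrix.one_apply]
    · simp [Matrix.one_apply, h]
  | succ k ih =>
    intro i j
    rw [pow_succ, Matrix.mul_apply]
    exact Finset.sum_nonneg fun l _ => mul_nonneg (ih i l) (hA l j)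

attribute [local instance] Matrix.linftyOpNormedAddCommGroup Matrix.linftyOpNormedRing
  Matrix.linftyOpNormedAlgebra

/-- Key lemma: a subinvariant value for a positive vector is a lower bound for the
spectral radius. -/
lemma specRad_key_lemma {m : ℕ} (hm : 0 < m) (A : Matrix (Fin m) (Fin m) ℝ)
    (hA : ∀ i j, 0 ≤ A i j)
    (x : Fin m → ℝ) (lam : ℝ) (hlam : 0 ≤ lam) (hx : ∀ i, 0 < x i)
    (hmain : ∀ i, lam * x i ≤ ∑ j, A i j * x j) : lam ≤ specRad A := by
  haveI : Nonempty (Fin m) := ⟨⟨0, hm⟩⟩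
  have hiter : ∀ k (i : Fin m), lam ^ k * x i ≤ ∑ j, (A ^ k) i j * x j := by
    intro k
    induction k with
    | zero =>
      intro i
      rw [pow_zero, one_mul, pow_zero]
      rw [show ∑ j, (1 : Matrix (Fin m) (Fin m) ℝ) i j * x j = x i by
        simp [Matrix.one_apply, Finset.sum_ite_eq]]
    | succ k ih =>
      intro i
      have hrw : ∑ j, (A ^ (k+1)) i j * x j = ∑ l, A i l * (∑ j, (A ^ k) l j * x j) := by
        simp only [pow_succ', Matrix.mul_apply, Finset.sum_mul, Finset.mul_sum]
        rw [Finset.sum_comm]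
        congr 1; ext l; congr 1; ext j; ring
      rw [hrw]
      calc lam ^ (k+1) * x i = lam ^ k * (lam * x i) := by ring
        _ ≤ lam ^ k * ∑ j, A i j * x j :=
            mul_le_mul_of_nonneg_left (hmain i) (pow_nonneg hlam k)
        _ = ∑ l, A i l * (lam ^ k * x l) := by rw [Finset.mul_sum]; congr 1; ext l; ring
        _ ≤ ∑ l, A i l * (∑ j, (A ^ k) l j * x j) :=
            Finset.sum_le_sum fun l _ => mul_le_mul_of_nonneg_left (ih l) (hA i l)
  obtain ⟨i0, -, hmax⟩ :=
    Finset.exists_max_image Finset.univ x ⟨Classical.arbitrary _, Finset.mem_univ _⟩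
  set Ac := A.map Complex.ofReal with hAc
  have hpowmap : ∀ k : ℕ, Ac ^ k = (A ^ k).map Complex.ofReal := by
    intro k
    have := map_pow ((Complex.ofRealHom : ℝ →+* ℂ).mapMatrix (m := Fin m)) A k
    simp only [RingHom.mapMatrix_apply] at this; exact this.symm
  have hnorm : ∀ k : ℕ, lam ^ k ≤ ‖Ac ^ k‖ := by
    intro k
    have h1 : lam ^ k * x i0 ≤ (∑ j, (A ^ k) i0 j) * x i0 := by
      calc lam ^ k * x i0 ≤ ∑ j, (A ^ k) i0 j * x j := hiter k i0
        _ ≤ ∑ j, (A ^ k) i0 j * x i0 := Finset.sum_le_sum fun j _ =>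
            mul_le_mul_of_nonneg_left (hmax j (Finset.mem_univ j))
              (specRad_aux_pow_entry_nonneg hA k i0 j)
        _ = (∑ j, (A ^ k) i0 j) * x i0 := by rw [Finset.sum_mul]
    have h2 : lam ^ k ≤ ∑ j, (A ^ k) i0 j :=
      le_of_mul_le_mul_right h1 (hx i0)
    have h3 : (∑ j, ‖(Ac ^ k) i0 j‖₊ : ℝ≥0) ≤ ‖Ac ^ k‖₊ := by
      rw [Matrix.linfty_opNNNorm_def]
      exact Finset.le_sup (f := fun i => ∑ j, ‖(Ac ^ k) i j‖₊) (Finset.mem_univ i0)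
    have h4 : ∑ j, ‖(Ac ^ k) i0 j‖ ≤ ‖Ac ^ k‖ := by
      have := h3
      rw [← NNReal.coe_le_coe] at this
      push_cast at this
      exact this
    have h5 : ∑ j, ‖(Ac ^ k) i0 j‖ = ∑ j, (A ^ k) i0 j := by
      apply Finset.sum_congr rfl
      intro j _
      rw [hpowmap, Matrix.map_apply, Complex.norm_real,
        Real.norm_of_nonneg (specRad_aux_pow_entry_nonneg hA k i0 j)]
    linarith
  have hsr : (ENNReal.ofReal lam) ≤ spectralRadius ℂ Ac := by
    refine le_trans ?_ (spectrum.limsup_pow_nnnorm_pow_one_div_le_spectralRadius Ac)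
    refine Filter.le_limsup_of_frequently_le ?_ (by isBoundedDefault)
    apply Filter.Eventually.frequently
    filter_upwards [Filter.eventually_ge_atTop 1] with k hk
    have hk0 : (k : ℝ) ≠ 0 := by positivity
    have hb : (ENNReal.ofReal lam) ^ (k : ℝ) ≤ (‖Ac ^ k‖₊ : ℝ≥0∞) := by
      rw [ENNReal.ofReal_rpow_of_nonneg hlam (by positivity)]
      rw [Real.rpow_natCast]
      rw [show (‖Ac ^ k‖₊ : ℝ≥0∞) = ENNReal.ofReal ‖Ac ^ k‖ from (ofReal_norm _).symm]
      exact ENNReal.ofReal_le_ofReal (hnorm k)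
    calc (ENNReal.ofReal lam)
        = ((ENNReal.ofReal lam) ^ (k : ℝ)) ^ (1 / (k : ℝ)) := by
          rw [← ENNReal.rpow_mul, mul_one_div, div_self hk0, ENNReal.rpow_one]
      _ ≤ (‖Ac ^ k‖₊ : ℝ≥0∞) ^ (1 / (k : ℝ)) :=
          ENNReal.rpow_le_rpow hb (by positivity)
  have hsr2 : spectralRadius ℂ Ac ≤ ENNReal.ofReal (specRad A) := by
    rw [spectralRadius]
    refine iSup₂_le fun μ hμ => ?_
    have hroot : ‖μ‖ ≤ specRad A :=
      specRad_aux_le_foldr_max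
        (Multiset.mem_map_of_mem _ (specRad_aux_mem_roots_of_mem_spectrum _ μ hμ))
    calc (‖μ‖₊ : ℝ≥0∞) = ENNReal.ofReal ‖μ‖ := (ofReal_norm μ).symm
      _ ≤ ENNReal.ofReal (specRad A) :=
          ENNReal.ofReal_le_ofReal hroot
  have := le_trans hsr hsr2
  rwa [ENNReal.ofReal_le_ofReal_iff (specRad_nonneg A)] at this

end Aux

theorem stmt_5 {n : ℕ} (hn : 0 < n) (A : Matrix (Fin n) (Fin n) ℝ)
    (hA : ∀ i j, 0 ≤ A i j) (hirr : Irred A)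
    (r : Fin n → ℝ) (hr : ∀ i, r i = ∑ j, A i j)
    (S : ℝ) (hS : IsLeast {x | ∃ i, x = A i i} S)
    (T : ℝ) (hT : IsLeast {x | ∃ i j, i ≠ j ∧ x = A i j} T)
    (hord : ∀ i j : Fin n, i ≤ j → r j ≤ r i) :
    specRad A ≥
      (r ⟨n - 1, by omega⟩ + S - T +
        Real.sqrt ((r ⟨n - 1, by omega⟩ - S + T) ^ 2 +
          4 * T * ∑ k ∈ Finset.Iio (⟨n - 1, by omega⟩ : Fin n),
            (r k - r ⟨n - 1, by omega⟩))) / 2 := by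
  have hnn : n - 1 < n := by omega
  set nn : Fin n := ⟨n - 1, hnn⟩ with hnndef
  have hT0 : 0 ≤ T := by obtain ⟨i, j, hij, hTe⟩ := hT.1; exact hTe ▸ hA i j
  have hSle : ∀ i, S ≤ A i i := fun i => hS.2 ⟨i, rfl⟩
  have hTle : ∀ i j, i ≠ j → T ≤ A i j := fun i j h => hT.2 ⟨i, j, h, rfl⟩
  have hjle : ∀ j : Fin n, j ≤ nn := fun j => by
    rw [Fin.le_def]; have := j.isLt; simp only [hnndef]; omega
  have hd : ∀ j, 0 ≤ r j - r nn := fun j => sub_nonneg.mpr (hord j nn (hjle j))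
  have hrn0 : 0 ≤ r nn := by
    rw [hr]; exact Finset.sum_nonneg fun j _ => hA nn j
  have hSrn : S ≤ r nn := le_trans (hSle nn) (by
    rw [hr]; exact Finset.single_le_sum (fun j _ => hA nn j) (Finset.mem_univ nn))
  have hIio : Finset.Iio nn = Finset.univ.erase nn := by
    ext j
    simp only [Finset.mem_Iio, Finset.mem_erase, Finset.mem_univ, and_true, Fin.lt_def,
      Ne, Fin.ext_iff, hnndef]
    have := j.isLt; omega
  set Sg : ℝ := ∑ k ∈ Finset.Iio nn, (r k - r nn) with hSgdef
  have hSg_univ : Sg = ∑ j, (r j - r nn) := by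
    rw [hSgdef, hIio]
    exact Finset.sum_erase _ (by simp)
  have hSg0 : 0 ≤ Sg := by
    rw [hSg_univ]; exact Finset.sum_nonneg fun j _ => hd j
  have base : r nn ≤ specRad A := by
    apply specRad_key_lemma hn A hA (fun _ => 1) (r nn) hrn0 (fun _ => one_pos)
    intro i
    simp only [mul_one]
    calc r nn ≤ r i := hord i nn (hjle i)
      _ = ∑ j, A i j := hr i
  rcases eq_or_lt_of_le (mul_nonneg hT0 hSg0) with hP | hP
  · -- degenerate case : T * Sg = 0 and the bound is r nn
    have h40 : 4 * T * Sg = 0 := by nlinarith [hP.symm]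
    have hs : Real.sqrt ((r nn - S + T) ^ 2 + 4 * T * Sg) = r nn - S + T := by
      rw [h40, add_zero, Real.sqrt_sq (by linarith)]
    rw [ge_iff_le, hs]
    linarith [base]
  · -- main case : T * Sg > 0
    have hD0 : (0:ℝ) ≤ (r nn - S + T) ^ 2 + 4 * T * Sg := by nlinarith
    set s : ℝ := Real.sqrt ((r nn - S + T) ^ 2 + 4 * T * Sg) with hsdef
    have hs2 : s ^ 2 = (r nn - S + T) ^ 2 + 4 * T * Sg := Real.sq_sqrt hD0
    have hsgt : |r nn - S + T| < s := by
      rw [hsdef, ← Real.sqrt_sq_eq_abs]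
      exact Real.sqrt_lt_sqrt (sq_nonneg _) (by nlinarith)
    have hs1 : r nn - S + T < s := lt_of_le_of_lt (le_abs_self _) hsgt
    have hs1' : -(r nn - S + T) < s := lt_of_le_of_lt (neg_le_abs _) hsgt
    set B : ℝ := (r nn + S - T + s) / 2 with hBdef
    have hBrn : r nn < B := by rw [hBdef]; linarith
    have hBST : S - T < B := by rw [hBdef]; linarith
    have hB0 : 0 ≤ B := le_trans hrn0 hBrn.le
    have hid : (B - r nn) * (B - (S - T)) = T * Sg := by
      rw [hBdef]; linear_combination hs2 / 4
    have hBne : B - (S - T) ≠ 0 := by linarith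
    set t : ℝ := 1 / (B - (S - T)) with htdef
    have ht : t * (B - (S - T)) = 1 := by
      rw [htdef]; field_simp
    have ht0 : 0 < t := by
      rw [htdef]; exact one_div_pos.mpr (by linarith)
    have htT : t * (T * Sg) = B - r nn := by
      calc t * (T * Sg) = (B - r nn) * (t * (B - (S - T))) := by rw [← hid]; ring
        _ = B - r nn := by rw [ht, mul_one]
    -- apply the key lemma with x j = 1 + t * (r j - r nn)
    have main : B ≤ specRad A := by
      apply specRad_key_lemma hn A hA (fun j => 1 + t * (r j - r nn)) B hB0
      · intro i
        have := mul_nonneg ht0.le (hd i)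
        linarith
      · intro i
        have step1 : ∑ j, A i j * (1 + t * (r j - r nn))
            = r i + t * ∑ j, A i j * (r j - r nn) := by
          rw [Finset.mul_sum, hr i, ← Finset.sum_add_distrib]
          apply Finset.sum_congr rfl
          intro j _
          ring
        have step2 : T * Sg + (S - T) * (r i - r nn) ≤ ∑ j, A i j * (r j - r nn) := by
          rw [hSg_univ]
          have hpt : ∀ j : Fin n,
              T * (r j - r nn) + (if j = i then (S - T) * (r i - r nn) else 0)
                ≤ A i j * (r j - r nn) := by
            intro j
            by_cases hji : j = i
            · subst hji
              simp only [if_true, eq_self_iff_true]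
              have : S * (r j - r nn) ≤ A j j * (r j - r nn) :=
                mul_le_mul_of_nonneg_right (hSle j) (hd j)
              linarith
            · simp only [if_neg hji]
              have : T * (r j - r nn) ≤ A i j * (r j - r nn) :=
                mul_le_mul_of_nonneg_right (hTle i j (Ne.symm hji)) (hd j)
              linarith
          calc T * (∑ j, (r j - r nn)) + (S - T) * (r i - r nn)
              = ∑ j, (T * (r j - r nn) + (if j = i then (S - T) * (r i - r nn) else 0)) := by
                rw [Finset.sum_add_distrib, ← Finset.mul_sum, Finset.sum_ite_eq' Finset.univ i
                  (fun _ => (S - T) * (r i - r nn))]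
                simp
            _ ≤ ∑ j, A i j * (r j - r nn) := Finset.sum_le_sum fun j _ => hpt j
        have step3 : B * (1 + t * (r i - r nn))
            = r i + t * (T * Sg + (S - T) * (r i - r nn)) := by
          linear_combination (r i - r nn) * ht - htT
        rw [step1, step3]
        have := mul_le_mul_of_nonneg_left step2 ht0.le
        linarith
    exact main
end
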